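/- There exist a finite set D of points in the Euclidean plane and a point t ∈ D such that the top-2 Voronoi cell V_{2,D}(t) = {q ∈ ℝ² : the number of t' ∈ D with dist(q, t') < dist(q, t) is at most 1} is not a convex set. -/

import Mathlib

/-- The top-`k` Voronoi cell of `t` with respect to a finite set `D` of points in the
plane: the locations `q` such that fewer than `k` points of `D` are strictly closer to
`q` than `t` is. -/
def topkVoronoiCell (k : ℕ) (D : Finset (EuclideanSpace ℝ (Fin 2)))
    (t : EuclideanSpace ℝ (Fin 2)) : Set (EuclideanSpace ℝ (Fin 2)) :=
  {q | (D.filter (fun t' => dist q t' < dist q t)).card ≤ k - 1}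

noncomputable def pt (x y : ℝ) : EuclideanSpace ℝ (Fin 2) := WithLp.toLp 2 ![x, y]

lemma pt_dist_lt (q₀ q₁ a₀ a₁ b₀ b₁ : ℝ) :
    dist (pt q₀ q₁) (pt a₀ a₁) < dist (pt q₀ q₁) (pt b₀ b₁) ↔
      (q₀ - a₀)^2 + (q₁ - a₁)^2 < (q₀ - b₀)^2 + (q₁ - b₁)^2 := by
  rw [EuclideanSpace.dist_eq, EuclideanSpace.dist_eq, Fin.sum_univ_two, Fin.sum_univ_two,
    Real.sqrt_lt_sqrt_iff (by positivity)]
  simp [Real.dist_eq, sq_abs, pt]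

lemma pt_ne {x y x' y' : ℝ} (h : x ≠ x') : pt x y ≠ pt x' y' := by
  intro he
  exact h (by simpa [pt] using congrArg (fun v : EuclideanSpace ℝ (Fin 2) => v 0) he)

/-- There is a configuration of points whose top-2 Voronoi cell is not convex. -/
theorem exists_nonconvex_top2VoronoiCell :
    ∃ (D : Finset (EuclideanSpace ℝ (Fin 2))) (t : EuclideanSpace ℝ (Fin 2)),
      t ∈ D ∧ ¬ Convex ℝ (topkVoronoiCell 2 D t) := by
  classical
  refine ⟨{pt 0 0, pt 2 0, pt 0 2}, pt 0 0, by simp, ?_⟩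
  intro hconv
  have hq₁ : pt 3 0 ∈ topkVoronoiCell 2 {pt 0 0, pt 2 0, pt 0 2} (pt 0 0) := by
    have h1 : ¬ dist (pt 3 0) (pt 0 0) < dist (pt 3 0) (pt 0 0) := lt_irrefl _
    have h2 : dist (pt 3 0) (pt 2 0) < dist (pt 3 0) (pt 0 0) := by
      rw [pt_dist_lt]; norm_num
    have h3 : ¬ dist (pt 3 0) (pt 0 2) < dist (pt 3 0) (pt 0 0) := by
      rw [pt_dist_lt]; norm_num
    simp only [topkVoronoiCell, Set.mem_setOf_eq, Finset.filter_insert, h1, h2, h3,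
      if_true, if_false, Finset.filter_singleton]
    simp
  have hq₂ : pt 0 3 ∈ topkVoronoiCell 2 {pt 0 0, pt 2 0, pt 0 2} (pt 0 0) := by
    have h1 : ¬ dist (pt 0 3) (pt 0 0) < dist (pt 0 3) (pt 0 0) := lt_irrefl _
    have h2 : ¬ dist (pt 0 3) (pt 2 0) < dist (pt 0 3) (pt 0 0) := by
      rw [pt_dist_lt]; norm_num
    have h3 : dist (pt 0 3) (pt 0 2) < dist (pt 0 3) (pt 0 0) := by
      rw [pt_dist_lt]; norm_num
    simp only [topkVoronoiCell, Set.mem_setOf_eq, Finset.filter_insert, h1, h2, h3,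
      if_true, if_false, Finset.filter_singleton]
    simp
  have hm := hconv hq₁ hq₂ (by norm_num : (0:ℝ) ≤ 1/2) (by norm_num : (0:ℝ) ≤ 1/2)
    (by norm_num)
  have hmeq : (1/2 : ℝ) • pt 3 0 + (1/2 : ℝ) • pt 0 3 = pt (3/2) (3/2) := by
    ext i
    fin_cases i <;>
      simp [pt, PiLp.add_apply, PiLp.smul_apply] <;> norm_num
  rw [hmeq] at hm
  have h1 : ¬ dist (pt (3/2) (3/2)) (pt 0 0) < dist (pt (3/2) (3/2)) (pt 0 0) := lt_irrefl _
  have h2 : dist (pt (3/2) (3/2)) (pt 2 0) < dist (pt (3/2) (3/2)) (pt 0 0) := by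
    rw [pt_dist_lt]; norm_num
  have h3 : dist (pt (3/2) (3/2)) (pt 0 2) < dist (pt (3/2) (3/2)) (pt 0 0) := by
    rw [pt_dist_lt]; norm_num
  have hab : pt 2 0 ≠ pt 0 2 := pt_ne (by norm_num)
  simp only [topkVoronoiCell, Set.mem_setOf_eq, Finset.filter_insert, h1, h2, h3,
    if_true, if_false, Finset.filter_singleton] at hm
  rw [Finset.card_insert_of_notMem (by simp [hab])] at hm
  simp at hm
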